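/- Let ξ be the random variable with independent Q̃-symbols. If P̃ has infinitely many columns with a zero entry and ∑_{k=1}^∞ ∑_{i: p_{ik}=0} q_{ik} = ∞, then the topological support of μ_ξ is a nowhere dense set of Lebesgue measure zero (μ_ξ is of pure C-type). -/

import Mathlib

open MeasureTheory Filter Finset Topology

/-- The coding map of the `Q̃`-representation: it sends a digit sequence
`ω`, with `k`-th digit in `{0, 1, ..., N k}`, to the point of `[0,1]` given by
formula (5) of the paper: `x = ∑_k D_k(x) L_{k-1}(x)`, i.e. the unique point in
the intersection of the nested cylinder intervals `Δ_{ω₁...ω_k}`. -/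
noncomputable def codingMap (N : ℕ → ℕ) (q : (k : ℕ) → Fin (N k + 1) → ℝ)
    (ω : (k : ℕ) → Fin (N k + 1)) : ℝ :=
  ∑' k : ℕ, (∑ j : Fin (N k + 1), if (j : ℕ) < (ω k : ℕ) then q k j else 0) *
    ∏ s ∈ Finset.range k, q s (ω s)

/-- `Γ_{Q̃(V)}`: the set of points of `[0,1]` admitting a `Q̃`-representation
whose `k`-th digit lies in `V k` for every `k`. -/
noncomputable def QtSet (N : ℕ → ℕ) (q : (k : ℕ) → Fin (N k + 1) → ℝ)
    (V : (k : ℕ) → Finset (Fin (N k + 1))) : Set ℝ :=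
  codingMap N q '' {ω | ∀ k, ω k ∈ V k}

/-- The topological support of a measure on `ℝ`: the set of points all of whose
neighbourhoods have positive measure.  It is the smallest closed set of full
measure. -/
def msupport (μ : Measure ℝ) : Set ℝ :=
  {x : ℝ | ∀ ε > 0, μ (Set.Ioo (x - ε) (x + ε)) ≠ 0}

section auxA
variable (N : ℕ → ℕ) (q : (k : ℕ) → Fin (N k + 1) → ℝ)

/-- the k-th term of the coding series -/
noncomputable def cmTerm (ω : (k : ℕ) → Fin (N k + 1)) (k : ℕ) : ℝ :=
  (∑ j : Fin (N k + 1), if (j : ℕ) < (ω k : ℕ) then q k j else 0) *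
    ∏ s ∈ Finset.range k, q s (ω s)

/-- length of rank-k cylinder -/
noncomputable def cmLen (ω : (k : ℕ) → Fin (N k + 1)) (k : ℕ) : ℝ :=
  ∏ s ∈ Finset.range k, q s (ω s)

theorem cmTerm_congr (ω ω' : (k : ℕ) → Fin (N k + 1)) (k : ℕ)
    (h : ∀ s ≤ k, ω s = ω' s) : cmTerm N q ω k = cmTerm N q ω' k := by
  unfold cmTerm
  rw [h k le_rfl]
  congr 1
  exact Finset.prod_congr rfl fun s hs => by
    rw [h s (le_of_lt (Finset.mem_range.1 hs))]

theorem cmLen_congr (ω ω' : (k : ℕ) → Fin (N k + 1)) (n : ℕ)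
    (h : ∀ s < n, ω s = ω' s) : cmLen N q ω n = cmLen N q ω' n :=
  Finset.prod_congr rfl fun s hs => by rw [h s (Finset.mem_range.1 hs)]

/-- Extension of a finite digit string to a full digit sequence. -/
noncomputable def extSeq (n : ℕ) (f : (k : Fin n) → Fin (N (k : ℕ) + 1)) (k : ℕ) :
    Fin (N k + 1) :=
  if h : k < n then f ⟨k, h⟩ else 0

theorem extSeq_lt (n : ℕ) (f : (k : Fin n) → Fin (N (k : ℕ) + 1)) (k : ℕ) (h : k < n) :
    extSeq N n f k = f ⟨k, h⟩ := dif_pos h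

variable (hq : ∀ k i, 0 < q k i) (hqs : ∀ k, ∑ i, q k i = 1)
include hq hqs

omit hqs in theorem cmLen_pos (ω : (k : ℕ) → Fin (N k + 1)) (k : ℕ) : 0 < cmLen N q ω k :=
  Finset.prod_pos fun s _ => hq s (ω s)

omit hqs in theorem cmTerm_nonneg (ω : (k : ℕ) → Fin (N k + 1)) (k : ℕ) :
    0 ≤ cmTerm N q ω k := by
  apply mul_nonneg
  · exact Finset.sum_nonneg fun j _ => by split <;> simp [le_of_lt, hq k j]
  · exact (cmLen_pos N q hq ω k).le

theorem cmTerm_le (ω : (k : ℕ) → Fin (N k + 1)) (k : ℕ) :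
    cmTerm N q ω k ≤ cmLen N q ω k - cmLen N q ω (k + 1) := by
  have hb : (∑ j : Fin (N k + 1), if (j : ℕ) < (ω k : ℕ) then q k j else 0)
      ≤ 1 - q k (ω k) := by
    classical
    have h1 : (∑ j : Fin (N k + 1), if (j : ℕ) < (ω k : ℕ) then q k j else 0)
        = ∑ j ∈ Finset.univ.filter (fun j : Fin (N k + 1) => (j : ℕ) < (ω k : ℕ)), q k j := by
      rw [Finset.sum_filter]
    have h2 : Finset.univ.filter (fun j : Fin (N k + 1) => (j : ℕ) < (ω k : ℕ))
        ⊆ Finset.univ.erase (ω k) := by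
      intro j hj
      simp only [Finset.mem_filter] at hj
      exact Finset.mem_erase.2 ⟨fun h => by simp [h] at hj, Finset.mem_univ _⟩
    have h3 : ∑ j ∈ Finset.univ.erase (ω k), q k j = 1 - q k (ω k) := by
      rw [Finset.sum_erase_eq_sub (Finset.mem_univ _), hqs k]
    rw [h1, ← h3]
    exact Finset.sum_le_sum_of_subset_of_nonneg h2 fun i _ _ => (hq k i).le
  have hL : cmLen N q ω (k + 1) = cmLen N q ω k * q k (ω k) := Finset.prod_range_succ _ _
  have key : cmTerm N q ω k
      = (∑ j : Fin (N k + 1), if (j : ℕ) < (ω k : ℕ) then q k j else 0) * cmLen N q ω k := rfl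
  rw [key, hL]
  nlinarith [cmLen_pos N q hq ω k]

theorem cmLen_le_one (ω : (k : ℕ) → Fin (N k + 1)) (k : ℕ) : cmLen N q ω k ≤ 1 := by
  unfold cmLen
  apply Finset.prod_le_one (fun s _ => (hq s (ω s)).le)
  intro s _
  have := Finset.single_le_sum (f := q s) (fun i _ => (hq s i).le) (Finset.mem_univ (ω s))
  rw [hqs s] at this; exact this

theorem cm_partial_le (ω : (k : ℕ) → Fin (N k + 1)) (n m : ℕ) :
    ∑ k ∈ Finset.range m, cmTerm N q ω (n + k) ≤ cmLen N q ω n := by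
  calc ∑ k ∈ Finset.range m, cmTerm N q ω (n + k)
      ≤ ∑ k ∈ Finset.range m, (cmLen N q ω (n + k) - cmLen N q ω (n + k + 1)) :=
        Finset.sum_le_sum fun k _ => cmTerm_le N q hq hqs ω (n + k)
    _ = cmLen N q ω (n + 0) - cmLen N q ω (n + m) := by
        have := Finset.sum_range_sub' (fun i => cmLen N q ω (n + i)) m
        simp only [← Nat.add_assoc] at this
        exact this
    _ ≤ cmLen N q ω n := by
        have hpos := cmLen_pos N q hq ω (n + m)
        simp only [Nat.add_zero]
        linarith

theorem cm_summable (ω : (k : ℕ) → Fin (N k + 1)) : Summable (cmTerm N q ω) := by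
  apply summable_of_sum_range_le (c := 1) (cmTerm_nonneg N q hq ω)
  intro n
  have := cm_partial_le N q hq hqs ω 0 n
  simp only [Nat.zero_add] at this
  exact this.trans (cmLen_le_one N q hq hqs ω 0)

theorem cm_lower (ω : (k : ℕ) → Fin (N k + 1)) (n : ℕ) :
    ∑ k ∈ Finset.range n, cmTerm N q ω k ≤ codingMap N q ω :=
  (cm_summable N q hq hqs ω).sum_le_tsum _ (fun k _ => cmTerm_nonneg N q hq ω k)

theorem cm_upper (ω : (k : ℕ) → Fin (N k + 1)) (n : ℕ) :
    codingMap N q ω ≤ ∑ k ∈ Finset.range n, cmTerm N q ω k + cmLen N q ω n := by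
  have hs := cm_summable N q hq hqs ω
  have hsplit := hs.sum_add_tsum_nat_add n
  have htail : ∑' k, cmTerm N q ω (k + n) ≤ cmLen N q ω n := by
    apply Real.tsum_le_of_sum_range_le (fun k => cmTerm_nonneg N q hq ω _)
    intro m
    have := cm_partial_le N q hq hqs ω n m
    simpa [Nat.add_comm] using this
  have : codingMap N q ω = ∑ k ∈ Finset.range n, cmTerm N q ω k + ∑' k, cmTerm N q ω (k + n) := by
    rw [hsplit]; rfl
  linarith

theorem codingMap_measurable : Measurable (codingMap N q) := by
  apply measurable_of_tendsto_metrizable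
    (f := fun n ω => ∑ k ∈ Finset.range n, cmTerm N q ω k)
  · intro n
    apply Finset.measurable_sum
    intro k _
    apply Measurable.mul
    · exact (measurable_of_countable
        (fun i : Fin (N k + 1) =>
          ∑ j : Fin (N k + 1), if (j : ℕ) < (i : ℕ) then q k j else 0)).comp
        (measurable_pi_apply k)
    · apply Finset.measurable_prod
      intro s _
      exact (measurable_of_countable (q s)).comp (measurable_pi_apply s)
  · rw [tendsto_pi_nhds]
    intro ω
    exact (cm_summable N q hq hqs ω).hasSum.tendsto_sum_nat

end auxA

section auxB
variable (N : ℕ → ℕ) (p q : (k : ℕ) → Fin (N k + 1) → ℝ)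

open scoped Classical in
noncomputable def coverSet (n : ℕ) : Set ℝ :=
  ⋃ f ∈ Finset.univ.filter
      (fun f : ((k : Fin n) → Fin (N (k : ℕ) + 1)) => ∀ k : Fin n, p k.1 (f k) ≠ 0),
    Set.Icc (∑ k ∈ Finset.range n, cmTerm N q (extSeq N n f) k)
      ((∑ k ∈ Finset.range n, cmTerm N q (extSeq N n f) k) + cmLen N q (extSeq N n f) n)

theorem coverSet_closed (n : ℕ) : IsClosed (coverSet N p q n) := by
  apply Set.Finite.isClosed_biUnion (Finset.finite_toSet _)
  intro f _
  exact isClosed_Icc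

variable (hq : ∀ k i, 0 < q k i) (hqs : ∀ k, ∑ i, q k i = 1)
include hq hqs

theorem image_subset_cover (n : ℕ) :
    codingMap N q '' {ω | ∀ k, p k (ω k) ≠ 0} ⊆ coverSet N p q n := by
  rintro x ⟨ω, hω, rfl⟩
  classical
  have hf : (fun k : Fin n => ω (k : ℕ)) ∈ Finset.univ.filter
      (fun f : ((k : Fin n) → Fin (N (k : ℕ) + 1)) => ∀ k : Fin n, p k.1 (f k) ≠ 0) :=
    Finset.mem_filter.2 ⟨Finset.mem_univ _, fun k => hω k.1⟩
  refine Set.mem_biUnion ((Finset.mem_coe).2 hf) ?_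
  · have hagree : ∀ s < n, extSeq N n (fun k : Fin n => ω (k : ℕ)) s = ω s := by
      intro s hs; rw [extSeq_lt N n _ s hs]
    have hterm : ∀ k < n, cmTerm N q (extSeq N n (fun k : Fin n => ω (k : ℕ))) k
        = cmTerm N q ω k := fun k hk =>
      cmTerm_congr N q _ _ k fun s hs => hagree s (lt_of_le_of_lt hs hk)
    have hlen : cmLen N q (extSeq N n (fun k : Fin n => ω (k : ℕ))) n = cmLen N q ω n :=
      cmLen_congr N q _ _ n hagree
    have hsum : ∑ k ∈ Finset.range n, cmTerm N q (extSeq N n (fun k : Fin n => ω (k : ℕ))) k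
        = ∑ k ∈ Finset.range n, cmTerm N q ω k :=
      Finset.sum_congr rfl fun k hk => hterm k (Finset.mem_range.1 hk)
    rw [Set.mem_Icc, hsum, hlen]
    exact ⟨cm_lower N q hq hqs ω n, cm_upper N q hq hqs ω n⟩

open scoped Classical in
theorem coverSet_volume (n : ℕ) :
    volume (coverSet N p q n) ≤ ENNReal.ofReal
      (∏ k ∈ Finset.range n, (1 - ∑ i, if p k i = 0 then q k i else 0)) := by
  classical
  unfold coverSet
  refine le_trans (measure_biUnion_finset_le _ _) ?_
  have hlen : ∀ f : (k : Fin n) → Fin (N (k : ℕ) + 1),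
      cmLen N q (extSeq N n f) n = ∏ k : Fin n, q (k : ℕ) (f k) := by
    intro f
    unfold cmLen
    rw [← Fin.prod_univ_eq_prod_range (fun k => q k (extSeq N n f k)) n]
    exact Finset.prod_congr rfl fun k _ => by
      rw [extSeq_lt N n f k.1 k.isLt]
  have hIcc : ∀ f : (k : Fin n) → Fin (N (k : ℕ) + 1),
      volume (Set.Icc (∑ k ∈ Finset.range n, cmTerm N q (extSeq N n f) k)
        ((∑ k ∈ Finset.range n, cmTerm N q (extSeq N n f) k) + cmLen N q (extSeq N n f) n))
      = ENNReal.ofReal (cmLen N q (extSeq N n f) n) := by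
    intro f; rw [Real.volume_Icc]; congr 1; ring
  rw [Finset.sum_congr rfl fun f _ => hIcc f]
  rw [← ENNReal.ofReal_sum_of_nonneg (fun f _ => by
    rw [hlen f]; exact Finset.prod_nonneg fun s _ => (hq s.1 (f s)).le)]
  apply ENNReal.ofReal_le_ofReal
  apply le_of_eq
  have hfl : Finset.univ.filter
      (fun f : ((k : Fin n) → Fin (N (k : ℕ) + 1)) => ∀ k : Fin n, p k.1 (f k) ≠ 0)
      = Fintype.piFinset (fun k : Fin n =>
          Finset.univ.filter (fun i : Fin (N (k : ℕ) + 1) => p (k : ℕ) i ≠ 0)) := by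
    ext f
    simp [Fintype.mem_piFinset]
  rw [Finset.sum_congr rfl fun f _ => hlen f, hfl, ← Finset.prod_univ_sum]
  have hfac : ∀ k : ℕ, ∑ i ∈ Finset.univ.filter (fun i : Fin (N k + 1) => p k i ≠ 0), q k i
      = 1 - ∑ i, if p k i = 0 then q k i else 0 := by
    intro k
    have hsplit := Finset.sum_filter_add_sum_filter_not Finset.univ
      (fun i : Fin (N k + 1) => p k i = 0) (q k)
    rw [hqs k] at hsplit
    have h1 : (∑ i, if p k i = 0 then q k i else 0)
        = ∑ i ∈ Finset.univ.filter (fun i : Fin (N k + 1) => p k i = 0), q k i :=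
      (Finset.sum_filter _ _).symm
    have h2 : Finset.univ.filter (fun i : Fin (N k + 1) => p k i ≠ 0)
        = Finset.univ.filter (fun i : Fin (N k + 1) => ¬ p k i = 0) := by
      simp only [ne_eq]
    rw [h1, h2]
    linarith
  calc (∏ i : Fin n, ∑ j ∈ Finset.univ.filter
          (fun i2 : Fin (N (i : ℕ) + 1) => p (i : ℕ) i2 ≠ 0), q (i : ℕ) j)
      = ∏ i : Fin n, (1 - ∑ j, if p (i : ℕ) j = 0 then q (i : ℕ) j else 0) :=
        Finset.prod_congr rfl fun k _ => hfac (k : ℕ)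
    _ = _ := Fin.prod_univ_eq_prod_range
        (fun k => 1 - ∑ i, if p k i = 0 then q k i else 0) n

end auxB

theorem prod_one_sub_tendsto_zero (r : ℕ → ℝ) (h1 : ∀ k, r k ≤ 1)
    (hdiv : Tendsto (fun n => ∑ k ∈ Finset.range n, r k) atTop atTop) :
    Tendsto (fun n => ∏ k ∈ Finset.range n, (1 - r k)) atTop (nhds 0) := by
  apply squeeze_zero (g := fun n => Real.exp (-(∑ k ∈ Finset.range n, r k)))
    (fun n => Finset.prod_nonneg fun k _ => by linarith [h1 k])
  · intro n
    calc ∏ k ∈ Finset.range n, (1 - r k)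
        ≤ ∏ k ∈ Finset.range n, Real.exp (-(r k)) :=
          Finset.prod_le_prod (fun k _ => by linarith [h1 k])
            (fun k _ => by linarith [Real.add_one_le_exp (-(r k))])
      _ = Real.exp (-(∑ k ∈ Finset.range n, r k)) := by
          rw [← Real.exp_sum]
          congr 1
          simp
  · exact Real.tendsto_exp_atBot.comp (tendsto_neg_atTop_atBot.comp hdiv)


open scoped Classical in
/-- Theorem 3, case 2): if the matrix `P̃` has infinitely many columns with a zero
entry, and `∑_k ∑_{i : p_{ik} = 0} q_{ik} = ∞`, then the topological support of
`μ_ξ` is a nowhere dense set of Lebesgue measure zero, i.e. `μ_ξ` is of pure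
C-type. -/
theorem support_C_type (N : ℕ → ℕ) (p q : (k : ℕ) → Fin (N k + 1) → ℝ)
    (μ : Measure ((k : ℕ) → Fin (N k + 1))) [IsProbabilityMeasure μ]
    (hp : ∀ k i, 0 ≤ p k i) (hq : ∀ k i, 0 < q k i)
    (hps : ∀ k, ∑ i, p k i = 1) (hqs : ∀ k, ∑ i, q k i = 1)
    (hmax : Tendsto (fun n => ∏ k ∈ Finset.range n, ⨆ i, q k i) atTop (nhds 0))
    (hμ : ∀ (n : ℕ) (ω : (k : ℕ) → Fin (N k + 1)),
      μ {x | ∀ k < n, x k = ω k} = ENNReal.ofReal (∏ k ∈ Finset.range n, p k (ω k)))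
    (μξ : Measure ℝ) (hμξ : μξ = Measure.map (codingMap N q) μ)
    (hinf : {k | ∃ i, p k i = 0}.Infinite)
    (hdiv : Tendsto
      (fun n => ∑ k ∈ Finset.range n, ∑ i, if p k i = 0 then q k i else 0)
      atTop atTop) :
    IsNowhereDense (msupport μξ) ∧ volume (msupport μξ) = 0 := by
  have hmeas : Measurable (codingMap N q) := codingMap_measurable N q hq hqs
  set S : Set ((k : ℕ) → Fin (N k + 1)) := {ω | ∀ k, p k (ω k) ≠ 0} with hS
  set A : Set ℝ := closure (codingMap N q '' S) with hA
  have hAclosed : IsClosed A := isClosed_closure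
  have hAsub : ∀ n, A ⊆ coverSet N p q n := fun n =>
    closure_minimal (image_subset_cover N p q hq hqs n) (coverSet_closed N p q n)
  have hAvol : volume A = 0 := by
    have hle : ∀ n, volume A ≤ ENNReal.ofReal
        (∏ k ∈ Finset.range n, (1 - ∑ i, if p k i = 0 then q k i else 0)) :=
      fun n => le_trans (measure_mono (hAsub n)) (coverSet_volume N p q hq hqs n)
    have h1k : ∀ k, (∑ i, if p k i = 0 then q k i else 0) ≤ 1 := by
      intro k
      rw [← hqs k]
      apply Finset.sum_le_sum
      intro i _
      split
      · exact le_rfl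
      · exact (hq k i).le
    have ht := prod_one_sub_tendsto_zero _ h1k hdiv
    have ht2 : Tendsto (fun n => ENNReal.ofReal
        (∏ k ∈ Finset.range n, (1 - ∑ i, if p k i = 0 then q k i else 0)))
        atTop (nhds 0) := by
      simpa using ENNReal.tendsto_ofReal ht
    exact le_antisymm (ge_of_tendsto' ht2 hle) zero_le
  have hScnull : μ Sᶜ = 0 := by
    have hSc : Sᶜ = ⋃ k : ℕ, {ω : (j : ℕ) → Fin (N j + 1) | p k (ω k) = 0} := by
      ext ω
      simp [hS, not_forall]
    rw [hSc]
    apply measure_iUnion_null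
    intro k
    apply measure_mono_null
      (t := ⋃ g : (j : Fin (k + 1)) → Fin (N (j : ℕ) + 1),
        ⋃ _ : p k (extSeq N (k + 1) g k) = 0, {x | ∀ j < k + 1, x j = extSeq N (k + 1) g j})
    · intro ω hω
      have hagree : ∀ j < k + 1, extSeq N (k + 1) (fun j : Fin (k + 1) => ω (j : ℕ)) j = ω j :=
        fun j hj => extSeq_lt N (k + 1) _ j hj
      refine Set.mem_iUnion.2 ⟨fun j : Fin (k + 1) => ω (j : ℕ), Set.mem_iUnion.2 ⟨?_, ?_⟩⟩
      · rw [hagree k (Nat.lt_succ_self k)]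
        exact hω
      · intro j hj
        exact (hagree j hj).symm
    · apply measure_iUnion_null
      intro g
      by_cases hg : p k (extSeq N (k + 1) g k) = 0
      · rw [Set.iUnion_eq_if, if_pos hg]
        rw [hμ (k + 1) (extSeq N (k + 1) g),
          Finset.prod_eq_zero (Finset.self_mem_range_succ k) hg]
        simp
      · simp [hg]
  have hμξA : μξ Aᶜ = 0 := by
    rw [hμξ, Measure.map_apply hmeas hAclosed.isOpen_compl.measurableSet]
    apply measure_mono_null _ hScnull
    intro ω hω
    simp only [Set.mem_preimage, Set.mem_compl_iff] at hω ⊢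
    intro hωS
    exact hω (subset_closure (Set.mem_image_of_mem _ hωS))
  have hsub : msupport μξ ⊆ A := by
    intro x hx
    by_contra hxA
    obtain ⟨ε, hε, hball⟩ := Metric.isOpen_iff.1 hAclosed.isOpen_compl x hxA
    apply hx ε hε
    apply measure_mono_null _ hμξA
    rw [← Real.ball_eq_Ioo]
    exact hball
  constructor
  · have h1 : closure (msupport μξ) ⊆ A := closure_minimal hsub hAclosed
    have h2 : interior (closure (msupport μξ)) ⊆ A := interior_subset.trans h1
    rcases Set.eq_empty_or_nonempty (interior (closure (msupport μξ))) with h | h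
    · exact h
    · exfalso
      have hpos : 0 < volume (interior (closure (msupport μξ))) :=
        isOpen_interior.measure_pos volume h
      have hle : volume (interior (closure (msupport μξ))) ≤ volume A := measure_mono h2
      rw [hAvol] at hle
      exact absurd (le_antisymm hle zero_le) hpos.ne'
  · exact measure_mono_null hsub hAvol
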